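/- Let (S, F, μ) be a probability space and let d be a positive integer. There exists a constant C_d > 0, depending only on d, such that for every ε > 0 and every measurable set A ⊆ S^d with μ^{⊗d}(A) > 1 − ε there exists a measurable set B ⊆ A with μ^{⊗d}(B) ≥ 1 − C_d · ε^{1/2^{d−1}} and with the following property: for every nonempty subset I ⊆ {1,…,d} and every x_{I^c} ∈ S^{I^c}, the section B_{x_{I^c}} = { x_I ∈ S^I : (x_I, x_{I^c}) ∈ B } is either empty or satisfies μ^{⊗|I|}(B_{x_{I^c}}) ≥ 1 − C_d · ε^{1/2^{d−1}}. -/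

import Mathlib

open MeasureTheory
open scoped ENNReal

namespace AKPSAux


open ENNReal

variable {S : Type*} [MeasurableSpace S] {d : ℕ}

/-- merge of two points along a coordinate set -/
def mrg (I : Finset (Fin d)) (y x : Fin d → S) : Fin d → S := fun i => if i ∈ I then y i else x i

theorem measurable_mrg (I : Finset (Fin d)) :
    Measurable (fun p : (Fin d → S) × (Fin d → S) => mrg I p.1 p.2) := by
  apply measurable_pi_lambda
  intro i
  by_cases h : i ∈ I
  · simpa only [mrg, if_pos h, Function.comp_def] using (measurable_pi_apply i).comp measurable_fst
  · simpa only [mrg, if_neg h, Function.comp_def] using (measurable_pi_apply i).comp measurable_snd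

theorem measurable_mrg_left (I : Finset (Fin d)) (x : Fin d → S) :
    Measurable (fun y : Fin d → S => mrg I y x) :=
  (measurable_mrg I).comp (measurable_id.prodMk measurable_const)

theorem mp_mrg (μ : Measure S) [IsProbabilityMeasure μ] (I : Finset (Fin d)) :
    MeasurePreserving (fun p : (Fin d → S) × (Fin d → S) => mrg I p.1 p.2)
      ((Measure.pi fun _ : Fin d => μ).prod (Measure.pi fun _ : Fin d => μ))
      (Measure.pi fun _ : Fin d => μ) := by
  refine ⟨measurable_mrg I, ?_⟩
  refine (Measure.pi_eq fun s hs => ?_).symm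
  rw [Measure.map_apply (measurable_mrg I) (MeasurableSet.univ_pi hs)]
  have hset : (fun p : (Fin d → S) × (Fin d → S) => mrg I p.1 p.2) ⁻¹' Set.pi Set.univ s
      = (Set.pi Set.univ fun i => if i ∈ I then s i else Set.univ) ×ˢ
        (Set.pi Set.univ fun i => if i ∈ I then Set.univ else s i) := by
    ext p
    simp only [Set.mem_preimage, Set.mem_pi, Set.mem_univ, forall_true_left, Set.mem_prod, mrg]
    constructor
    · intro h
      constructor <;> intro i <;> by_cases hi : i ∈ I <;>
        simp only [hi, if_true, if_false, Set.mem_univ] <;> simpa [hi] using h i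
    · intro h i
      by_cases hi : i ∈ I <;> simp only [hi, if_true, if_false]
      · simpa [hi] using h.1 i
      · simpa [hi] using h.2 i
  rw [hset, Measure.prod_prod, Measure.pi_pi, Measure.pi_pi, ← Finset.prod_mul_distrib]
  refine Finset.prod_congr rfl fun i _ => ?_
  by_cases hi : i ∈ I <;> simp [hi]

/-- measure of the section of `A` through `x` in coordinates `I`, as a cylinder measure -/
noncomputable def Gsec (μ : Measure S) (A : Set (Fin d → S)) (I : Finset (Fin d))
    (x : Fin d → S) : ℝ≥0∞ :=
  (Measure.pi fun _ : Fin d => μ) {y | mrg I y x ∈ A}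

theorem Gsec_le_one {μ : Measure S} [IsProbabilityMeasure μ] {A : Set (Fin d → S)}
    {I : Finset (Fin d)} {x : Fin d → S} : Gsec μ A I x ≤ 1 :=
  prob_le_one

theorem Gsec_congr {μ : Measure S} {A : Set (Fin d → S)} {I : Finset (Fin d)}
    {z z' : Fin d → S} (h : ∀ i ∉ I, z i = z' i) : Gsec μ A I z = Gsec μ A I z' := by
  unfold Gsec
  congr 1
  ext y
  have : mrg I y z = mrg I y z' := by
    funext i
    by_cases hi : i ∈ I <;> simp [mrg, hi, h i]
  simp [Set.mem_setOf_eq, this]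

theorem measurable_Gsec {μ : Measure S} [IsProbabilityMeasure μ] {A : Set (Fin d → S)}
    (hA : MeasurableSet A) (I : Finset (Fin d)) : Measurable (Gsec μ A I) := by
  have h : MeasurableSet ((fun p : (Fin d → S) × (Fin d → S) => mrg I p.1 p.2) ⁻¹' A) :=
    (measurable_mrg I) hA
  exact measurable_measure_prodMk_right h

theorem Gsec_univ {μ : Measure S} {A : Set (Fin d → S)} (x : Fin d → S) :
    Gsec μ A Finset.univ x = (Measure.pi fun _ : Fin d => μ) A := by
  unfold Gsec
  congr 1
  ext y
  have : mrg (Finset.univ : Finset (Fin d)) y x = y := by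
    funext i; simp [mrg]
  simp [Set.mem_setOf_eq, this]

theorem lintegral_Gsec {μ : Measure S} [IsProbabilityMeasure μ] {A : Set (Fin d → S)}
    (hA : MeasurableSet A) {I K : Finset (Fin d)} (hIK : Disjoint I K) (x : Fin d → S) :
    ∫⁻ y, Gsec μ A I (mrg K y x) ∂(Measure.pi fun _ : Fin d => μ)
      = Gsec μ A (I ∪ K) x := by
  set π := (Measure.pi fun _ : Fin d => μ) with hπ
  have hm : Measurable (fun p : (Fin d → S) × (Fin d → S) => mrg I p.1 (mrg K p.2 x)) :=
    (measurable_mrg I).comp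
      (measurable_fst.prodMk ((measurable_mrg_left K x).comp measurable_snd))
  have hT : MeasurableSet {p : (Fin d → S) × (Fin d → S) | mrg I p.1 (mrg K p.2 x) ∈ A} :=
    hm hA
  have h1 : ∫⁻ y, Gsec μ A I (mrg K y x) ∂π
      = (π.prod π) {p : (Fin d → S) × (Fin d → S) | mrg I p.1 (mrg K p.2 x) ∈ A} := by
    rw [Measure.prod_apply_symm hT]
    rfl
  rw [h1]
  have hkey : {p : (Fin d → S) × (Fin d → S) | mrg I p.1 (mrg K p.2 x) ∈ A}
      = ((fun p : (Fin d → S) × (Fin d → S) => mrg K p.1 p.2) ∘ Prod.swap) ⁻¹'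
        {w : Fin d → S | mrg (I ∪ K) w x ∈ A} := by
    ext p
    have : mrg (I ∪ K) (mrg K p.2 p.1) x = mrg I p.1 (mrg K p.2 x) := by
      funext i
      by_cases hi : i ∈ I
      · have hk : i ∉ K := Finset.disjoint_left.mp hIK hi
        simp [mrg, hi, hk]
      · by_cases hk : i ∈ K <;> simp [mrg, hi, hk]
    simp only [Set.mem_setOf_eq, Set.mem_preimage, Function.comp_apply, Prod.fst_swap,
      Prod.snd_swap, this]
  rw [hkey]
  have hW : MeasurableSet {w : Fin d → S | mrg (I ∪ K) w x ∈ A} :=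
    (measurable_mrg_left (I ∪ K) x) hA
  rw [((mp_mrg μ K).comp Measure.measurePreserving_swap).measure_preimage
    hW.nullMeasurableSet]
  rfl


/-- threshold for the section condition in coordinates `I` -/
noncomputable def thr (ε : ℝ) (d : ℕ) (I : Finset (Fin d)) : ℝ≥0∞ :=
  ENNReal.ofReal (ε ^ ((1 : ℝ) / 2 ^ (d - I.card)))

theorem thr_ne_top {ε : ℝ} {I : Finset (Fin d)} : thr ε d I ≠ ⊤ := ENNReal.ofReal_ne_top

theorem thr_ne_zero {ε : ℝ} (hε : 0 < ε) {I : Finset (Fin d)} : thr ε d I ≠ 0 :=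
  (ENNReal.ofReal_pos.mpr (Real.rpow_pos_of_pos hε _)).ne'

/-- the cleaned subset: points of `A` all of whose section measures are large -/
def Bset (μ : Measure S) (ε : ℝ) (A : Set (Fin d → S)) : Set (Fin d → S) :=
  A ∩ ⋂ (I : Finset (Fin d)) (_ : I.Nonempty), {x | 1 ≤ Gsec μ A I x + thr ε d I}

theorem half_pow_le {m n : ℕ} (h : m ≤ n) : (1 : ℝ) / 2 ^ n ≤ 1 / 2 ^ m := by
  apply one_div_le_one_div_of_le (by positivity)
  exact pow_le_pow_right₀ (by norm_num) h

theorem Bset_subset {μ : Measure S} {ε : ℝ} {A : Set (Fin d → S)} : Bset μ ε A ⊆ A :=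
  Set.inter_subset_left

theorem Bset_measurable {μ : Measure S} [IsProbabilityMeasure μ] {ε : ℝ} {A : Set (Fin d → S)}
    (hA : MeasurableSet A) : MeasurableSet (Bset μ ε A) := by
  apply hA.inter
  refine MeasurableSet.iInter fun I => MeasurableSet.iInter fun _ => ?_
  exact measurableSet_le measurable_const ((measurable_Gsec hA I).add_const _)

theorem sec_empty (μ : Measure S) {ε : ℝ} {A : Set (Fin d → S)} {I I' : Finset (Fin d)}
    (hII' : I ⊆ I') (hI' : I'.Nonempty) (x : Fin d → S)
    (hnc : ¬ (1 ≤ Gsec μ A I' x + thr ε d I')) :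
    {y : Fin d → S | mrg I y x ∈ Bset μ ε A} = ∅ := by
  ext y
  simp only [Set.mem_setOf_eq, Set.mem_empty_iff_false, iff_false]
  intro hy
  apply hnc
  have h2 := hy.2
  simp only [Set.mem_iInter, Set.mem_setOf_eq] at h2
  have h3 := h2 I' hI'
  have hGc : Gsec μ A I' (mrg I y x) = Gsec μ A I' x := Gsec_congr fun i hi => by
    have : i ∉ I := fun h => hi (hII' h)
    simp [mrg, this]
  rwa [hGc] at h3

theorem sec_bound (μ : Measure S) [IsProbabilityMeasure μ] {ε : ℝ} (hε : 0 < ε) (hε1 : ε < 1)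
    {A : Set (Fin d → S)} (hA : MeasurableSet A) {I₀ : Finset (Fin d)} (hI₀ : I₀.Nonempty)
    (x : Fin d → S) (H : ∀ I, I₀ ⊆ I → 1 ≤ Gsec μ A I x + thr ε d I) :
    1 - ((2 : ℝ) ^ d + 1) * ε ^ ((1 : ℝ) / 2 ^ (d - 1)) ≤
      ((Measure.pi fun _ : Fin d => μ) {y | mrg I₀ y x ∈ Bset μ ε A}).toReal := by
  classical
  set π := (Measure.pi fun _ : Fin d => μ) with hπdef
  set e := ε ^ ((1 : ℝ) / 2 ^ (d - 1)) with he
  have he_pos : 0 < e := Real.rpow_pos_of_pos hε _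
  set 𝒥 : Finset (Finset (Fin d)) := Finset.univ.filter (fun I => I.Nonempty ∧ ¬ I₀ ⊆ I)
    with h𝒥
  set Bad : Finset (Fin d) → Set (Fin d → S) :=
    fun I => {y | ¬ (1 ≤ Gsec μ A I (mrg I₀ y x) + thr ε d I)} with hBadDef
  -- bound for each bad set
  have hbad : ∀ I ∈ 𝒥, π (Bad I) ≤ ENNReal.ofReal e := by
    intro I hI
    obtain ⟨hIne, hns⟩ := (Finset.mem_filter.mp hI).2
    set K := I₀ \ I with hK
    have hKne : K.Nonempty := by rw [hK, Finset.sdiff_nonempty]; exact hns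
    have hdisj : Disjoint I K := Finset.disjoint_sdiff
    have hunion_sub : I₀ ⊆ I ∪ K := by
      rw [hK, Finset.union_sdiff_self_eq_union]; exact Finset.subset_union_right
    have hcongr : ∀ y : Fin d → S, Gsec μ A I (mrg I₀ y x) = Gsec μ A I (mrg K y x) := by
      intro y
      apply Gsec_congr
      intro i hi
      by_cases hi0 : i ∈ I₀
      · have hiK : i ∈ K := Finset.mem_sdiff.mpr ⟨hi0, hi⟩
        simp [mrg, hi0, hiK]
      · have hiK : i ∉ K := fun h => hi0 (Finset.mem_sdiff.mp h).1
        simp [mrg, hi0, hiK]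
    have hsubset : Bad I ⊆ {y | thr ε d I ≤ 1 - Gsec μ A I (mrg K y x)} := by
      intro y hy
      simp only [hBadDef, Set.mem_setOf_eq, not_le] at hy
      rw [hcongr y] at hy
      exact ENNReal.le_sub_of_add_le_left (measure_ne_top _ _) hy.le
    have hgm : Measurable fun y : Fin d → S => Gsec μ A I (mrg K y x) :=
      (measurable_Gsec hA I).comp (measurable_mrg_left K x)
    have hgf : ∫⁻ y, Gsec μ A I (mrg K y x) ∂π ≠ ⊤ := by
      rw [lintegral_Gsec hA hdisj x]
      exact measure_ne_top _ _
    have hint : ∫⁻ y, (1 - Gsec μ A I (mrg K y x)) ∂π = 1 - Gsec μ A (I ∪ K) x := by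
      have h := lintegral_sub (f := fun _ => (1 : ℝ≥0∞)) hgm hgf
        (Filter.Eventually.of_forall fun y => Gsec_le_one)
      rw [lintegral_const] at h
      simp only [measure_univ, mul_one] at h
      rw [lintegral_Gsec hA hdisj x] at h
      exact h
    have hmeasf : Measurable fun y : Fin d → S => (1 : ℝ≥0∞) - Gsec μ A I (mrg K y x) :=
      measurable_const.sub hgm
    have hmarkov := mul_meas_ge_le_lintegral₀ (μ := π) hmeasf.aemeasurable (thr ε d I)
    have h2 : thr ε d I * π (Bad I) ≤ thr ε d (I ∪ K) := by
      calc thr ε d I * π (Bad I)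
          ≤ thr ε d I * π {y | thr ε d I ≤ 1 - Gsec μ A I (mrg K y x)} :=
            mul_le_mul_right (measure_mono hsubset) _
        _ ≤ ∫⁻ y, (1 - Gsec μ A I (mrg K y x)) ∂π := hmarkov
        _ = 1 - Gsec μ A (I ∪ K) x := hint
        _ ≤ thr ε d (I ∪ K) := tsub_le_iff_right.mpr (by rw [add_comm]; exact H _ hunion_sub)
    have h3 : π (Bad I) ≤ thr ε d (I ∪ K) / thr ε d I :=
      (ENNReal.le_div_iff_mul_le (Or.inl (thr_ne_zero hε)) (Or.inl thr_ne_top)).mpr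
        (by rw [mul_comm]; exact h2)
    refine h3.trans ?_
    unfold thr
    rw [← ENNReal.ofReal_div_of_pos (Real.rpow_pos_of_pos hε _), ← Real.rpow_sub hε]
    apply ENNReal.ofReal_le_ofReal
    rw [he]
    apply Real.rpow_le_rpow_of_exponent_ge hε hε1.le
    -- exponent inequality
    have hcardU : (I ∪ K).card = I.card + K.card := Finset.card_union_of_disjoint hdisj
    have hIcard1 : 1 ≤ I.card := hIne.card_pos
    have hKcard1 : 1 ≤ K.card := hKne.card_pos
    have hUle : (I ∪ K).card ≤ d := by
      simpa [Finset.card_fin] using Finset.card_le_univ (I ∪ K)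
    have hab : d - I.card = (d - (I ∪ K).card) + K.card := by omega
    have ha2 : (d - (I ∪ K).card) + 1 ≤ d - 1 := by omega
    have h4 : (1 : ℝ) / 2 ^ (d - I.card) ≤ 1 / 2 ^ ((d - (I ∪ K).card) + 1) := by
      apply half_pow_le; omega
    have h5 : (1 : ℝ) / 2 ^ (d - 1) ≤ 1 / 2 ^ ((d - (I ∪ K).card) + 1) := half_pow_le ha2
    have h6 : (1 : ℝ) / 2 ^ (d - (I ∪ K).card) = 2 / 2 ^ ((d - (I ∪ K).card) + 1) := by
      rw [pow_succ]; ring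
    calc (1 : ℝ) / 2 ^ (d - 1) ≤ 1 / 2 ^ ((d - (I ∪ K).card) + 1) := h5
      _ = 1 / 2 ^ (d - (I ∪ K).card) - 1 / 2 ^ ((d - (I ∪ K).card) + 1) := by rw [h6]; ring
      _ ≤ 1 / 2 ^ (d - (I ∪ K).card) - 1 / 2 ^ (d - I.card) := sub_le_sub_left h4 _
  -- inclusion
  have hsubP : {y : Fin d → S | mrg I₀ y x ∈ A}
      ⊆ {y : Fin d → S | mrg I₀ y x ∈ Bset μ ε A} ∪ ⋃ I ∈ 𝒥, Bad I := by
    intro y hy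
    by_cases hall : ∀ I : Finset (Fin d), I.Nonempty →
        1 ≤ Gsec μ A I (mrg I₀ y x) + thr ε d I
    · left
      show mrg I₀ y x ∈ Bset μ ε A
      refine ⟨hy, ?_⟩
      simp only [Set.mem_iInter, Set.mem_setOf_eq]
      exact fun I hI => hall I hI
    · right
      push_neg at hall
      obtain ⟨I, hIne, hlt⟩ := hall
      have hns : ¬ I₀ ⊆ I := by
        intro hsub
        have hGc : Gsec μ A I (mrg I₀ y x) = Gsec μ A I x := Gsec_congr fun i hi => by
          have : i ∉ I₀ := fun h => hi (hsub h)
          simp [mrg, this]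
        rw [hGc] at hlt
        exact absurd (H I hsub) (not_le.mpr hlt)
      refine Set.mem_biUnion (Finset.mem_filter.mpr ⟨Finset.mem_univ _, hIne, hns⟩) ?_
      simp only [hBadDef, Set.mem_setOf_eq, not_le]
      exact hlt
  -- measure chain
  have hchain : π {y | mrg I₀ y x ∈ A}
      ≤ π {y | mrg I₀ y x ∈ Bset μ ε A} + ∑ I ∈ 𝒥, π (Bad I) := by
    calc π {y | mrg I₀ y x ∈ A}
        ≤ π ({y | mrg I₀ y x ∈ Bset μ ε A} ∪ ⋃ I ∈ 𝒥, Bad I) := measure_mono hsubP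
      _ ≤ π {y | mrg I₀ y x ∈ Bset μ ε A} + π (⋃ I ∈ 𝒥, Bad I) := measure_union_le _ _
      _ ≤ π {y | mrg I₀ y x ∈ Bset μ ε A} + ∑ I ∈ 𝒥, π (Bad I) :=
          add_le_add le_rfl (measure_biUnion_finset_le 𝒥 Bad)
  have hsum_ne_top : ∑ I ∈ 𝒥, π (Bad I) ≠ ⊤ :=
    ENNReal.sum_ne_top.mpr fun I _ => measure_ne_top _ _
  have htr := ENNReal.toReal_mono
    (ENNReal.add_ne_top.mpr ⟨measure_ne_top _ _, hsum_ne_top⟩) hchain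
  rw [ENNReal.toReal_add (measure_ne_top _ _) hsum_ne_top,
    ENNReal.toReal_sum (fun I _ => measure_ne_top _ _)] at htr
  -- lower bound on the A-section
  have hP : π {y | mrg I₀ y x ∈ A} = Gsec μ A I₀ x := rfl
  have hI₀cond := H I₀ (subset_refl _)
  have h1le : (1 : ℝ) ≤ (Gsec μ A I₀ x).toReal + ε ^ ((1 : ℝ) / 2 ^ (d - I₀.card)) := by
    have h := ENNReal.toReal_mono
      (ENNReal.add_ne_top.mpr ⟨measure_ne_top _ _, thr_ne_top⟩) hI₀cond
    rw [ENNReal.toReal_add (measure_ne_top _ _) thr_ne_top, ENNReal.toReal_one] at h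
    rwa [show (thr ε d I₀).toReal = ε ^ ((1 : ℝ) / 2 ^ (d - I₀.card)) from
      ENNReal.toReal_ofReal (Real.rpow_nonneg hε.le _)] at h
  have hexp0 : ε ^ ((1 : ℝ) / 2 ^ (d - I₀.card)) ≤ e := by
    rw [he]
    apply Real.rpow_le_rpow_of_exponent_ge hε hε1.le
    apply half_pow_le
    have := hI₀.card_pos
    omega
  have hsum : ∑ I ∈ 𝒥, (π (Bad I)).toReal ≤ (2 : ℝ) ^ d * e := by
    calc ∑ I ∈ 𝒥, (π (Bad I)).toReal ≤ ∑ _I ∈ 𝒥, e :=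
        Finset.sum_le_sum fun I hI => ENNReal.toReal_le_of_le_ofReal he_pos.le (hbad I hI)
      _ = (𝒥.card : ℝ) * e := by rw [Finset.sum_const, nsmul_eq_mul]
      _ ≤ (2 : ℝ) ^ d * e := by
        apply mul_le_mul_of_nonneg_right _ he_pos.le
        have h1 : 𝒥.card ≤ Fintype.card (Finset (Fin d)) := Finset.card_le_univ 𝒥
        calc (𝒥.card : ℝ) ≤ (Fintype.card (Finset (Fin d)) : ℝ) := by exact_mod_cast h1
          _ = 2 ^ d := by rw [Fintype.card_finset, Fintype.card_fin]; push_cast; ring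
  rw [hP] at htr
  linarith


end AKPSAux

open AKPSAux

/-- Lemma on extraction of a subset with large sections (Lemma B.2 / Lemma 11 of [AKPS]):
on a probability space `(S, μ)`, for every `d ≥ 1` there is a constant `C_d` such that any
measurable `A ⊆ S^d` with `μ^{⊗d}(A) > 1 - ε` contains a measurable `B` with
`μ^{⊗d}(B) ≥ 1 - C_d ε^{1/2^{d-1}}` all of whose nonempty sections (in any subset `I` of
coordinates) have `μ^{⊗|I|}`-measure at least `1 - C_d ε^{1/2^{d-1}}`.  Since `μ` is a
probability measure, the measure `μ^{⊗|I|}` of a section is expressed as the `μ^{⊗d}`-measure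
of its cylinder. -/
theorem stmt_1 {S : Type*} [MeasurableSpace S] (μ : Measure S) [IsProbabilityMeasure μ]
    (d : ℕ) (hd : 0 < d) :
    ∃ C : ℝ, 0 < C ∧
      ∀ ε : ℝ, 0 < ε → ∀ A : Set (Fin d → S), MeasurableSet A →
        1 - ε < ((Measure.pi fun _ : Fin d => μ) A).toReal →
        ∃ B : Set (Fin d → S), MeasurableSet B ∧ B ⊆ A ∧
          1 - C * ε ^ ((1 : ℝ) / 2 ^ (d - 1)) ≤ ((Measure.pi fun _ : Fin d => μ) B).toReal ∧
          ∀ I : Finset (Fin d), I.Nonempty → ∀ x : Fin d → S,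
            {y : Fin d → S | (fun i => if i ∈ I then y i else x i) ∈ B} = ∅ ∨
            1 - C * ε ^ ((1 : ℝ) / 2 ^ (d - 1)) ≤
              ((Measure.pi fun _ : Fin d => μ)
                {y : Fin d → S | (fun i => if i ∈ I then y i else x i) ∈ B}).toReal := by
  classical
  refine ⟨(2 : ℝ) ^ d + 1, by positivity, ?_⟩
  intro ε hε A hA hAε
  by_cases hε1 : ε < 1
  · -- main case
    have hFin : Nonempty (Fin d) := ⟨⟨0, hd⟩⟩
    have hS : Nonempty S := by
      by_contra h
      rw [not_nonempty_iff] at h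
      have h0 : μ Set.univ = 1 := measure_univ
      rw [Set.univ_eq_empty_iff.mpr h, measure_empty] at h0
      exact zero_ne_one h0
    obtain ⟨s0⟩ := hS
    have hcond_univ : ∀ x : Fin d → S,
        1 ≤ Gsec μ A Finset.univ x + thr ε d Finset.univ := by
      intro x
      rw [Gsec_univ]
      have hteq : thr ε d (Finset.univ : Finset (Fin d)) = ENNReal.ofReal ε := by
        unfold thr
        have h0 : d - (Finset.univ : Finset (Fin d)).card = 0 := by
          simp [Finset.card_univ]
        rw [h0]
        norm_num
      rw [hteq]
      calc (1 : ℝ≥0∞) = ENNReal.ofReal 1 := ENNReal.ofReal_one.symm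
        _ ≤ ENNReal.ofReal (((Measure.pi fun _ : Fin d => μ) A).toReal + ε) :=
            ENNReal.ofReal_le_ofReal (by linarith)
        _ ≤ ENNReal.ofReal (((Measure.pi fun _ : Fin d => μ) A).toReal) + ENNReal.ofReal ε :=
            ENNReal.ofReal_add_le
        _ = (Measure.pi fun _ : Fin d => μ) A + ENNReal.ofReal ε := by
            rw [ENNReal.ofReal_toReal (measure_ne_top _ _)]
    refine ⟨Bset μ ε A, Bset_measurable hA, Bset_subset, ?_, ?_⟩
    · -- global measure bound
      set x₀ : Fin d → S := fun _ => s0 with hx₀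
      have hH : ∀ I, (Finset.univ : Finset (Fin d)) ⊆ I →
          1 ≤ Gsec μ A I x₀ + thr ε d I := by
        intro I hI
        have hIu : I = Finset.univ := Finset.univ_subset_iff.mp hI
        subst hIu
        exact hcond_univ x₀
      have hs := sec_bound μ hε hε1 hA Finset.univ_nonempty x₀ hH
      have huniv : {y : Fin d → S | mrg Finset.univ y x₀ ∈ Bset μ ε A} = Bset μ ε A := by
        ext y
        have hm : mrg (Finset.univ : Finset (Fin d)) y x₀ = y := by
          funext i; simp [mrg]
        simp only [Set.mem_setOf_eq, hm]
      rwa [huniv] at hs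
    · intro I hI x
      by_cases hc : ∀ I' : Finset (Fin d), I ⊆ I' → 1 ≤ Gsec μ A I' x + thr ε d I'
      · right
        exact sec_bound μ hε hε1 hA hI x hc
      · left
        push_neg at hc
        obtain ⟨I', hII', hnc⟩ := hc
        exact sec_empty μ hII' (hI.mono hII') x (not_le.mpr hnc)
  · -- trivial case : ε ≥ 1
    push_neg at hε1
    have h1 : (1 : ℝ) ≤ ε ^ ((1 : ℝ) / 2 ^ (d - 1)) := by
      have := Real.rpow_le_rpow (le_refl (0 : ℝ) |>.trans zero_le_one) hε1
        (by positivity : (0 : ℝ) ≤ (1 : ℝ) / 2 ^ (d - 1))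
      rwa [Real.one_rpow] at this
    have h2 : (1 : ℝ) ≤ ((2 : ℝ) ^ d + 1) * ε ^ ((1 : ℝ) / 2 ^ (d - 1)) := by
      nlinarith [pow_pos (show (0 : ℝ) < 2 by norm_num) d]
    refine ⟨∅, MeasurableSet.empty, Set.empty_subset _, ?_, fun I hI x => Or.inl (by ext y; simp)⟩
    simp only [measure_empty, ENNReal.toReal_zero]
    linarith
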